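/- Let (A,d) be a nonempty compact metric space that is homogeneous, i.e. for all a, b ∈ A there exists an isometric bijection f : A → A with f(a) = b, and let μ be a Borel probability measure on A that is invariant under every isometric bijection of A (the pushforward of μ under every such map equals μ). For t > 0 and a ∈ A define m_a(t) := ( ∫_A e^{-t·d(a,b)} dμ(b) )^{-1}. Then for every a ∈ A, limsup_{t→∞} log m_a(t)/log t equals the upper Minkowski dimension of A and liminf_{t→∞} log m_a(t)/log t equals the lower Minkowski dimension of A. -/

import Mathlib

open MeasureTheory Filter
open scoped ENNReal Topology

noncomputable section

/-- The maximum diversity `|tA|₊` of a compact metric space `A`: the supremum over Borel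
probability measures `μ` on `A` of `(∫∫ e^{-t d(a,b)} dμ dμ)⁻¹`. -/
def maxDiv (A : Type*) [MetricSpace A] [MeasurableSpace A] (t : ℝ) : ℝ≥0∞ :=
  ⨆ μ : ProbabilityMeasure A,
    (∫⁻ a, ∫⁻ b, ENNReal.ofReal (Real.exp (-t * dist a b))
      ∂(μ : Measure A) ∂(μ : Measure A))⁻¹

/-- The covering number `N(A,ε)`: the smallest `m` such that `A` is covered by `m` closed
balls of radius `ε` centered at points of `A`. -/
def coveringNumber (A : Type*) [MetricSpace A] (ε : ℝ) : ℕ :=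
  sInf {m : ℕ | ∃ s : Finset A, s.card = m ∧ ∀ a : A, ∃ c ∈ s, dist a c ≤ ε}

/-- The packing number `M(A,ε)`: the largest `m` such that there are `m` points of `A`
whose closed balls of radius `ε` are pairwise disjoint. -/
def packingNumber (A : Type*) [MetricSpace A] (ε : ℝ) : ℕ :=
  sSup {m : ℕ | ∃ x : Fin m → A, Pairwise fun j k =>
    Disjoint (Metric.closedBall (x j) ε) (Metric.closedBall (x k) ε)}

/-- The upper Minkowski dimension `limsup_{ε→0⁺} log N(A,ε)/log(1/ε)`, in `[0,∞]`. -/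
def upperMinkowski (A : Type*) [MetricSpace A] : ℝ≥0∞ :=
  limsup (fun ε : ℝ =>
    ENNReal.ofReal (Real.log (coveringNumber A ε) / Real.log (1 / ε))) (𝓝[>] 0)

/-- The lower Minkowski dimension `liminf_{ε→0⁺} log N(A,ε)/log(1/ε)`, in `[0,∞]`. -/
def lowerMinkowski (A : Type*) [MetricSpace A] : ℝ≥0∞ :=
  liminf (fun ε : ℝ =>
    ENNReal.ofReal (Real.log (coveringNumber A ε) / Real.log (1 / ε))) (𝓝[>] 0)

section Aux
open Metric
set_option linter.unusedSectionVars false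
variable {A : Type*} [MetricSpace A] [CompactSpace A] [Nonempty A]

lemma covering_exists {ε : ℝ} (hε : 0 < ε) :
    ∃ s : Finset A, ∀ a : A, ∃ c ∈ s, dist a c ≤ ε := by
  obtain ⟨t, htf, hcover⟩ := (totallyBounded_iff.mp (isCompact_univ (X := A)).totallyBounded) ε hε
  refine ⟨htf.toFinset, fun a => ?_⟩
  have := hcover (Set.mem_univ a)
  simp only [Set.mem_iUnion] at this
  obtain ⟨c, hc, hball⟩ := this
  exact ⟨c, htf.mem_toFinset.mpr hc, le_of_lt (mem_ball.mp hball)⟩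

lemma coveringNumber_spec {ε : ℝ} (hε : 0 < ε) :
    ∃ s : Finset A, s.card = coveringNumber A ε ∧ ∀ a : A, ∃ c ∈ s, dist a c ≤ ε := by
  have hne : {m : ℕ | ∃ s : Finset A, s.card = m ∧ ∀ a : A, ∃ c ∈ s, dist a c ≤ ε}.Nonempty := by
    obtain ⟨s, hs⟩ := covering_exists (A := A) hε
    exact ⟨s.card, s, rfl, hs⟩
  have := Nat.sInf_mem hne
  obtain ⟨s, hcard, hs⟩ := this
  exact ⟨s, hcard, hs⟩

lemma one_le_coveringNumber {ε : ℝ} (hε : 0 < ε) : 1 ≤ coveringNumber A ε := by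
  obtain ⟨s, hcard, hs⟩ := coveringNumber_spec (A := A) hε
  rcases hs (Classical.arbitrary A) with ⟨c, hc, -⟩
  have h1 : 1 ≤ s.card := Finset.card_pos.mpr ⟨c, hc⟩
  omega
  
lemma coveringNumber_le {ε : ℝ} (s : Finset A) (hs : ∀ a : A, ∃ c ∈ s, dist a c ≤ ε) :
    coveringNumber A ε ≤ s.card := Nat.sInf_le ⟨s, rfl, hs⟩

variable [MeasurableSpace A] [BorelSpace A]
  (hhom : ∀ a b : A, ∃ f : A ≃ᵢ A, f a = b)
  (μ : Measure A) [IsProbabilityMeasure μ]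
  (hinv : ∀ f : A ≃ᵢ A, Measure.map f μ = μ)

include hhom hinv

lemma ball_meas_const (x y : A) (ε : ℝ) :
    μ (closedBall x ε) = μ (closedBall y ε) := by
  obtain ⟨f, hf⟩ := hhom x y
  have hmeas : Measurable f := f.continuous.measurable
  have h1 : μ (closedBall y ε) = (Measure.map f μ) (closedBall y ε) := by rw [hinv f]
  rw [h1, Measure.map_apply hmeas measurableSet_closedBall]
  congr 1
  ext z
  simp [Metric.mem_closedBall, ← hf, f.isometry.dist_eq]

lemma meas_ball_lower (a : A) {ε : ℝ} (hε : 0 < ε) :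
    ((coveringNumber A ε : ℝ≥0∞))⁻¹ ≤ μ (closedBall a ε) := by
  obtain ⟨s, hcard, hs⟩ := coveringNumber_spec (A := A) hε
  have hcover : (Set.univ : Set A) ⊆ ⋃ c ∈ s, closedBall c ε := by
    intro z _
    obtain ⟨c, hc, hd⟩ := hs z
    exact Set.mem_biUnion hc (mem_closedBall.mpr hd)
  have h1 : (1 : ℝ≥0∞) ≤ ∑ c ∈ s, μ (closedBall c ε) := by
    calc (1:ℝ≥0∞) = μ Set.univ := (measure_univ).symm
    _ ≤ μ (⋃ c ∈ s, closedBall c ε) := measure_mono hcover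
    _ ≤ ∑ c ∈ s, μ (closedBall c ε) := measure_biUnion_finset_le s _
  have h2 : ∑ c ∈ s, μ (closedBall c ε) = (s.card : ℝ≥0∞) * μ (closedBall a ε) := by
    rw [Finset.sum_congr rfl (fun c _ => ball_meas_const hhom μ hinv c a ε)]
    simp [Finset.sum_const, nsmul_eq_mul]
  rw [h2, hcard] at h1
  have hN0 : (coveringNumber A ε : ℝ≥0∞) ≠ 0 := by
    exact_mod_cast Nat.one_le_iff_ne_zero.mp (one_le_coveringNumber (A := A) hε)
  exact (ENNReal.inv_le_iff_le_mul (fun _ => hN0) (fun h => absurd h (ENNReal.natCast_ne_top _))).mpr h1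

lemma meas_ball_upper (a : A) {ε : ℝ} (hε : 0 < ε) :
    μ (closedBall a ε) ≤ ((coveringNumber A (2*ε) : ℝ≥0∞))⁻¹ := by
  classical
  -- maximal packing
  obtain ⟨s₀, hs₀⟩ := covering_exists (A := A) (half_pos hε)
  set P : Finset A → Prop := fun S =>
    (S : Set A).Pairwise fun x y => Disjoint (closedBall x ε) (closedBall y ε) with hP
  have hbound : ∀ S : Finset A, P S → S.card ≤ s₀.card := by
    intro S hS
    have : ∀ x ∈ S, ∃ c ∈ s₀, dist x c ≤ ε/2 := fun x _ => hs₀ x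
    choose g hg₁ hg₂ using this
    apply Finset.card_le_card_of_injOn (fun x => if hx : x ∈ S then g x hx else Classical.arbitrary A)
    · intro x hx; have hx' : x ∈ S := by simpa using hx
      simp only [hx', dif_pos]; exact hg₁ x hx'
    · intro x hx y hy hxy
      simp only [Finset.mem_coe] at hx hy
      simp only [hx, hy, dif_pos] at hxy
      by_contra hne
      have hd : dist x y ≤ ε := by
        calc dist x y ≤ dist x (g x hx) + dist y (g y hy) := by
              rw [hxy]; exact dist_triangle_right x y (g y hy)
        _ ≤ ε/2 + ε/2 := add_le_add (hg₂ x hx) (hg₂ y hy)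
        _ = ε := by ring
      have := hS hx hy hne
      have hmem : y ∈ closedBall x ε ∩ closedBall y ε :=
        ⟨mem_closedBall.mpr (by rwa [dist_comm]), mem_closedBall.mpr (by simp [hε.le])⟩
      exact (this.ne_of_mem hmem.1 hmem.2) rfl
  -- the set of cardinalities
  set C : Set ℕ := {n | ∃ S : Finset A, P S ∧ S.card = n} with hC
  have hCne : C.Nonempty := ⟨0, ∅, by simp [hP], rfl⟩
  have hCbdd : BddAbove C := ⟨s₀.card, fun n ⟨S, hS, hn⟩ => hn ▸ hbound S hS⟩
  obtain ⟨S, hSP, hScard⟩ := Nat.sSup_mem hCne hCbdd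
  -- maximality: every point is 2ε-close to S
  have hmax : ∀ z : A, ∃ x ∈ S, dist z x ≤ 2*ε := by
    intro z
    by_contra hcon
    push_neg at hcon
    have hzS : z ∉ S := by
      intro hz
      have h1 := hcon z hz
      simp only [dist_self] at h1
      linarith
    have hdisj : ∀ x ∈ S, Disjoint (closedBall z ε) (closedBall x ε) := by
      intro x hx
      rw [Set.disjoint_left]
      intro w hw hw'
      have : dist z x ≤ 2*ε := by
        calc dist z x ≤ dist z w + dist w x := dist_triangle z w x
        _ ≤ ε + ε := add_le_add (mem_closedBall'.mp hw) (mem_closedBall.mp hw')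
        _ = 2*ε := by ring
      exact absurd this (not_le.mpr (hcon x hx))
    have hP' : P (insert z S) := by
      rw [hP]
      intro x hx y hy hxy
      simp only [Finset.coe_insert, Set.mem_insert_iff, Finset.mem_coe] at hx hy
      rcases hx with rfl | hx <;> rcases hy with rfl | hy
      · exact absurd rfl hxy
      · exact hdisj y hy
      · exact (hdisj x hx).symm
      · exact hSP hx hy hxy
    have : (insert z S).card ∈ C := ⟨insert z S, hP', rfl⟩
    have hle := le_csSup hCbdd this
    rw [Finset.card_insert_of_notMem hzS, hScard] at hle
    omega
  -- S is nonempty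
  have hSne : S.Nonempty := by
    obtain ⟨x, hx, -⟩ := hmax (Classical.arbitrary A)
    exact ⟨x, hx⟩
  -- covering number bound
  have hNle : coveringNumber A (2*ε) ≤ S.card :=
    coveringNumber_le S (fun z => hmax z)
  -- measure bound via disjointness
  have hdisjsum : (S.card : ℝ≥0∞) * μ (closedBall a ε) ≤ 1 := by
    have hsum : ∑ x ∈ S, μ (closedBall x ε) = μ (⋃ x ∈ S, closedBall x ε) := by
      rw [measure_biUnion_finset hSP (fun x _ => measurableSet_closedBall)]
    have : ∑ x ∈ S, μ (closedBall x ε) = (S.card : ℝ≥0∞) * μ (closedBall a ε) := by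
      rw [Finset.sum_congr rfl (fun c _ => ball_meas_const hhom μ hinv c a ε)]
      simp [Finset.sum_const, nsmul_eq_mul]
    rw [← this, hsum]
    exact prob_le_one
  calc μ (closedBall a ε) ≤ ((S.card : ℝ≥0∞))⁻¹ := by
        rw [ENNReal.le_inv_iff_mul_le, mul_comm]; exact hdisjsum
  _ ≤ ((coveringNumber A (2*ε) : ℝ≥0∞))⁻¹ := by
        exact ENNReal.inv_le_inv' (by exact_mod_cast hNle)

omit hhom hinv

section Integral

lemma exp_integrable (t : ℝ) (a : A) :
    Integrable (fun b => Real.exp (-t * dist a b)) μ := by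
  have hc : Continuous (fun b : A => Real.exp (-t * dist a b)) := by
    exact Real.continuous_exp.comp ((continuous_const.mul (continuous_const.dist continuous_id)))
  exact hc.integrable_of_hasCompactSupport
    (IsCompact.of_isClosed_subset isCompact_univ (isClosed_tsupport _) (Set.subset_univ _))

lemma I_le_one {t : ℝ} (ht : 0 ≤ t) (a : A) :
    ∫ b, Real.exp (-t * dist a b) ∂μ ≤ 1 := by
  have h1 : ∫ b, Real.exp (-t * dist a b) ∂μ ≤ ∫ _b, (1:ℝ) ∂μ := by
    apply integral_mono (exp_integrable μ t a) (integrable_const _)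
    intro b
    simp only
    rw [← Real.exp_zero]
    apply Real.exp_le_exp.mpr
    have : 0 ≤ t * dist a b := mul_nonneg ht dist_nonneg
    linarith
  simpa using h1

lemma I_lower {t : ℝ} (ht : 0 < t) (a : A) :
    Real.exp (-1) * (μ (closedBall a (1/t))).toReal ≤ ∫ b, Real.exp (-t * dist a b) ∂μ := by
  have hms : MeasurableSet (closedBall a (1/t)) := measurableSet_closedBall
  have h1 : ∫ b, Set.indicator (closedBall a (1/t)) (fun _ => Real.exp (-1)) b ∂μ
      ≤ ∫ b, Real.exp (-t * dist a b) ∂μ := by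
    apply integral_mono ((integrable_const _).indicator hms) (exp_integrable μ t a)
    intro b
    by_cases hb : b ∈ closedBall a (1/t)
    · rw [Set.indicator_of_mem hb]
      apply Real.exp_le_exp.mpr
      have hd : dist b a ≤ 1/t := mem_closedBall.mp hb
      have : t * dist a b ≤ 1 := by
        rw [dist_comm]
        calc t * dist b a ≤ t * (1/t) := by nlinarith [dist_nonneg (x := b) (y := a)]
        _ = 1 := by field_simp
      linarith
    · rw [Set.indicator_of_notMem hb]
      positivity
  rwa [integral_indicator_const _ hms, smul_eq_mul, mul_comm] at h1

lemma I_upper {t s : ℝ} (ht : 0 < t) (a : A) :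
    ∫ b, Real.exp (-t * dist a b) ∂μ
      ≤ (μ (closedBall a s)).toReal + Real.exp (-(t*s)) := by
  have hms : MeasurableSet (closedBall a s) := measurableSet_closedBall
  have h1 : ∫ b, Real.exp (-t * dist a b) ∂μ
      ≤ ∫ b, (Set.indicator (closedBall a s) (fun _ => (1:ℝ)) b + Real.exp (-(t*s))) ∂μ := by
    apply integral_mono (exp_integrable μ t a)
      (((integrable_const _).indicator hms).add (integrable_const _))
    intro b
    simp only [Pi.add_apply]
    by_cases hb : b ∈ closedBall a s
    · rw [Set.indicator_of_mem hb]
      have : Real.exp (-t * dist a b) ≤ 1 := by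
        rw [← Real.exp_zero]
        apply Real.exp_le_exp.mpr
        nlinarith [dist_nonneg (x := a) (y := b)]
      have : (0:ℝ) < Real.exp (-(t*s)) := Real.exp_pos _
      linarith
    · rw [Set.indicator_of_notMem hb]
      have hd : s < dist b a := by
        simpa [mem_closedBall, not_le] using hb
      have : Real.exp (-t * dist a b) ≤ Real.exp (-(t*s)) := by
        apply Real.exp_le_exp.mpr
        rw [dist_comm]
        nlinarith
      have h0 : (0:ℝ) ≤ Set.indicator (closedBall a s) (fun _ => (1:ℝ)) b := by
        apply Set.indicator_nonneg; intro _ _; norm_num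
      linarith
  rw [integral_add ((integrable_const _).indicator hms) (integrable_const _),
    integral_indicator_const _ hms, integral_const, smul_eq_mul, mul_one, probReal_univ,
    one_smul] at h1
  exact h1

lemma I_pos (t : ℝ) (a : A) :
    0 < ∫ b, Real.exp (-t * dist a b) ∂μ := by
  obtain ⟨r, hr⟩ := (isBounded_of_compactSpace (α := A)).subset_closedBall a
  have h1 : ∫ _b, Real.exp (-(|t| * r)) ∂μ ≤ ∫ b, Real.exp (-t * dist a b) ∂μ := by
    apply integral_mono (integrable_const _) (exp_integrable μ t a)
    intro b
    apply Real.exp_le_exp.mpr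
    have hd : dist b a ≤ r := hr (Set.mem_univ b)
    have h2 : t * dist a b ≤ |t| * r := by
      calc t * dist a b ≤ |t * dist a b| := le_abs_self _
      _ = |t| * dist a b := by rw [abs_mul, abs_of_nonneg dist_nonneg]
      _ ≤ |t| * r := by
          rw [dist_comm]
          exact mul_le_mul_of_nonneg_left hd (abs_nonneg t)
    linarith
  have : (0:ℝ) < ∫ _b, Real.exp (-(|t| * r)) ∂μ := by
    rw [integral_const, probReal_univ, one_smul]
    exact Real.exp_pos _
  linarith

end Integral

section FilterAux

lemma map_inv_atTop_real : Filter.map (fun x : ℝ => x⁻¹) atTop = 𝓝[>] (0:ℝ) := by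
  apply le_antisymm
  · exact tendsto_inv_atTop_nhdsGT_zero
  · have h1 : Filter.map (fun x : ℝ => x⁻¹) (𝓝[>] (0:ℝ)) ≤ atTop := tendsto_inv_nhdsGT_zero
    have h2 := Filter.map_mono (m := fun x : ℝ => x⁻¹) h1
    rwa [Filter.map_map, (by funext x; simp : (fun x:ℝ => x⁻¹) ∘ (fun x:ℝ => x⁻¹) = id),
      Filter.map_id] at h2

lemma eventually_mul_log_le_rpow {K δ : ℝ} (hδ : 0 < δ) :
    ∀ᶠ t : ℝ in atTop, K * Real.log t ≤ t ^ δ := by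
  have h1 : Tendsto (fun t : ℝ => t ^ (δ/2)) atTop atTop := tendsto_rpow_atTop (by positivity)
  filter_upwards [h1.eventually_ge_atTop (K * (2/δ)), eventually_ge_atTop (1:ℝ)] with t h2 h3
  have ht : (0:ℝ) < t := by linarith
  have hlogpos : 0 ≤ Real.log t := Real.log_nonneg h3
  have hpow_pos : (0:ℝ) < t ^ (δ/2) := Real.rpow_pos_of_pos ht _
  rcases le_or_gt K 0 with hK | hK
  · have : K * Real.log t ≤ 0 := mul_nonpos_of_nonpos_of_nonneg hK hlogpos
    have h7 : (0:ℝ) < t ^ δ := Real.rpow_pos_of_pos ht _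
    linarith
  · have h4 : δ/2 * Real.log t ≤ t ^ (δ/2) - 1 := by
      have := Real.log_le_sub_one_of_pos (Real.rpow_pos_of_pos ht (δ/2))
      rwa [Real.log_rpow ht] at this
    have hinv2 : (2/δ) * (δ/2) = 1 := by field_simp
    have hlog : Real.log t ≤ t ^ (δ/2) * (2/δ) := by
      nlinarith [mul_le_mul_of_nonneg_left h4 (le_of_lt (show (0:ℝ) < 2/δ by positivity))]
    have hsq : t ^ (δ/2) * t ^ (δ/2) = t ^ δ := by
      rw [← Real.rpow_add ht]; norm_num
    calc K * Real.log t ≤ K * (t ^ (δ/2) * (2/δ)) := mul_le_mul_of_nonneg_left hlog hK.le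
    _ = (K * (2/δ)) * t ^ (δ/2) := by ring
    _ ≤ t ^ (δ/2) * t ^ (δ/2) := mul_le_mul_of_nonneg_right h2 hpow_pos.le
    _ = t ^ δ := hsq

lemma tendsto_m2 {δ : ℝ} (hδ : δ < 1) :
    Tendsto (fun t : ℝ => 2 * t ^ (δ - 1)) atTop (𝓝[>] (0:ℝ)) := by
  rw [tendsto_nhdsWithin_iff]
  constructor
  · have h1 : Tendsto (fun t : ℝ => t ^ (-(1 - δ))) atTop (𝓝 0) :=
      tendsto_rpow_neg_atTop (by linarith)
    have h2 : Tendsto (fun t : ℝ => 2 * t ^ (δ - 1)) atTop (𝓝 (2 * 0)) := by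
      apply Tendsto.const_mul
      convert h1 using 2 with t
      ring_nf
    simpa using h2
  · filter_upwards [eventually_gt_atTop (0:ℝ)] with t ht
    exact Set.mem_Ioi.mpr (by positivity)

lemma tendsto_rpow_neg_nhdsGT {e : ℝ} (he : e < 0) :
    Tendsto (fun x : ℝ => x ^ e) (𝓝[>] (0:ℝ)) atTop := by
  have h := (tendsto_rpow_atTop (show 0 < -e by linarith)).comp
    (tendsto_inv_nhdsGT_zero)
  apply h.congr'
  filter_upwards [self_mem_nhdsWithin] with x hx
  have hx0 : (0:ℝ) < x := Set.mem_Ioi.mp hx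
  show (x⁻¹) ^ (-e) = x ^ e
  rw [Real.inv_rpow hx0.le, ← Real.rpow_neg hx0.le, neg_neg]

lemma tendsto_tmap {δ : ℝ} (hδ0 : 0 < δ) (hδ : δ < 1) :
    Tendsto (fun ε : ℝ => (ε/2) ^ (1/(δ-1))) (𝓝[>] (0:ℝ)) atTop := by
  have hhalf : Tendsto (fun ε : ℝ => ε/2) (𝓝[>] (0:ℝ)) (𝓝[>] (0:ℝ)) := by
    rw [tendsto_nhdsWithin_iff]
    constructor
    · have h := ((continuous_id : Continuous (id : ℝ → ℝ)).div_const 2).tendsto 0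
      simp only [id_eq, zero_div] at h
      exact h.mono_left nhdsWithin_le_nhds
    · filter_upwards [self_mem_nhdsWithin] with ε hε
      have : (0:ℝ) < ε := Set.mem_Ioi.mp hε
      exact Set.mem_Ioi.mpr (by positivity)
  exact (tendsto_rpow_neg_nhdsGT (by
    apply div_neg_of_pos_of_neg one_pos; linarith)).comp hhalf

end FilterAux

section Core

variable (hhom : ∀ a b : A, ∃ f : A ≃ᵢ A, f a = b)
  (hinv : ∀ f : A ≃ᵢ A, Measure.map f μ = μ) (a : A)

include hhom hinv

lemma F_upper_event :
    ∀ᶠ t : ℝ in atTop,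
      ENNReal.ofReal (Real.log (∫ b, Real.exp (-t * dist a b) ∂μ)⁻¹ / Real.log t)
        ≤ ENNReal.ofReal (Real.log (coveringNumber A (1/t) : ℕ) / Real.log (1/(1/t)))
          + ENNReal.ofReal (1/Real.log t) := by
  filter_upwards [eventually_gt_atTop (1:ℝ)] with t ht1
  have ht0 : (0:ℝ) < t := by linarith
  have hlt : 0 < Real.log t := Real.log_pos ht1
  set N := coveringNumber A (1/t) with hNdef
  have hN1 : 1 ≤ N := one_le_coveringNumber (by positivity)
  have hNR : (1:ℝ) ≤ (N:ℝ) := by exact_mod_cast hN1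
  set I := ∫ b, Real.exp (-t * dist a b) ∂μ with hIdef
  have hIpos : 0 < I := I_pos μ t a
  -- lower bound on I
  have hkey : Real.exp (-1) * (N:ℝ)⁻¹ ≤ I := by
    have h1 := I_lower μ ht0 a
    have h2 : ((N:ℝ≥0∞))⁻¹ ≤ μ (closedBall a (1/t)) :=
      meas_ball_lower hhom μ hinv a (by positivity)
    have h3 : (N:ℝ)⁻¹ ≤ (μ (closedBall a (1/t))).toReal := by
      have := ENNReal.toReal_mono (measure_ne_top μ _) h2
      simpa [ENNReal.toReal_inv] using this
    calc Real.exp (-1) * (N:ℝ)⁻¹ ≤ Real.exp (-1) * (μ (closedBall a (1/t))).toReal :=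
          mul_le_mul_of_nonneg_left h3 (Real.exp_pos _).le
    _ ≤ I := h1
  have hlogN : 0 ≤ Real.log N := Real.log_nonneg hNR
  have hlog : Real.log I⁻¹ ≤ 1 + Real.log N := by
    rw [Real.log_inv]
    have h4 : Real.log (Real.exp (-1) * (N:ℝ)⁻¹) ≤ Real.log I :=
      Real.log_le_log (by positivity) hkey
    rw [Real.log_mul (Real.exp_ne_zero _) (by positivity), Real.log_exp, Real.log_inv] at h4
    linarith
  have hdiv : Real.log I⁻¹ / Real.log t ≤ Real.log N / Real.log t + 1 / Real.log t := by
    rw [← add_div]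
    gcongr
    linarith
  have hfin : 1/(1/t) = t := one_div_one_div t
  rw [hfin]
  calc ENNReal.ofReal (Real.log I⁻¹ / Real.log t)
      ≤ ENNReal.ofReal (Real.log N / Real.log t + 1 / Real.log t) :=
        ENNReal.ofReal_le_ofReal hdiv
  _ ≤ ENNReal.ofReal (Real.log N / Real.log t) + ENNReal.ofReal (1 / Real.log t) :=
        ENNReal.ofReal_add_le

lemma F_lower_event {δ c η : ℝ} (hδ0 : 0 < δ) (hδ1 : δ < 1) (hc : 0 ≤ c) (hη : 0 < η) :
    ∀ᶠ t : ℝ in atTop,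
      (c * Real.log (1/(2 * t ^ (δ-1))) ≤ Real.log (coveringNumber A (2 * t ^ (δ-1)) : ℕ)) →
      ENNReal.ofReal (c*(1-δ) - η)
        ≤ ENNReal.ofReal (Real.log (∫ b, Real.exp (-t * dist a b) ∂μ)⁻¹ / Real.log t) := by
  filter_upwards [eventually_mul_log_le_rpow (K := c*(1-δ)) hδ0, eventually_gt_atTop (1:ℝ),
    Real.tendsto_log_atTop.eventually_ge_atTop ((c+1)*Real.log 2/η)] with t hrpow ht1 hlogt hN
  have ht0 : (0:ℝ) < t := by linarith
  have hlt : 0 < Real.log t := Real.log_pos ht1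
  have hs : (0:ℝ) < t ^ (δ-1) := Real.rpow_pos_of_pos ht0 _
  set s : ℝ := t ^ (δ-1) with hsdef
  have hε : (0:ℝ) < 2*s := by positivity
  set N := coveringNumber A (2*s) with hNdef
  have hN1 : 1 ≤ N := one_le_coveringNumber hε
  have hNR : (1:ℝ) ≤ (N:ℝ) := by exact_mod_cast hN1
  set I := ∫ b, Real.exp (-t * dist a b) ∂μ with hIdef
  have hIpos : 0 < I := I_pos μ t a
  have hts : t * s = t ^ δ := by
    rw [hsdef]
    nth_rewrite 1 [← Real.rpow_one t]
    rw [← Real.rpow_add ht0]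
    norm_num
  -- upper bound on I
  have hIub : I ≤ (N:ℝ)⁻¹ + Real.exp (-(t^δ)) := by
    have h1 := I_upper (s := s) μ ht0 a
    have h2 : μ (closedBall a s) ≤ ((N:ℝ≥0∞))⁻¹ := meas_ball_upper hhom μ hinv a hs
    have h3 : (μ (closedBall a s)).toReal ≤ (N:ℝ)⁻¹ := by
      have hNtop : ((N:ℝ≥0∞))⁻¹ ≠ ⊤ := by
        have : (N:ℝ≥0∞) ≠ 0 := by exact_mod_cast Nat.one_le_iff_ne_zero.mp hN1
        simp [this]
      have := ENNReal.toReal_mono hNtop h2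
      simpa [ENNReal.toReal_inv] using this
    rw [hts] at h1
    linarith
  -- log lower bound via min
  have hlog2 : (0:ℝ) ≤ Real.log 2 := Real.log_nonneg one_le_two
  have hminlog : min (Real.log N) (t^δ) - Real.log 2 ≤ Real.log I⁻¹ := by
    rw [Real.log_inv]
    rcases le_total ((N:ℝ)⁻¹) (Real.exp (-(t^δ))) with h | h
    · have hle : I ≤ 2 * Real.exp (-(t^δ)) := by linarith
      have h4 : Real.log I ≤ Real.log (2 * Real.exp (-(t^δ))) :=
        Real.log_le_log hIpos hle
      rw [Real.log_mul two_ne_zero (Real.exp_ne_zero _), Real.log_exp] at h4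
      have : min (Real.log N) (t^δ) ≤ t^δ := min_le_right _ _
      linarith
    · have hle : I ≤ 2 * (N:ℝ)⁻¹ := by linarith
      have h4 : Real.log I ≤ Real.log (2 * (N:ℝ)⁻¹) :=
        Real.log_le_log hIpos hle
      rw [Real.log_mul two_ne_zero (by positivity), Real.log_inv] at h4
      have : min (Real.log N) (t^δ) ≤ Real.log N := min_le_left _ _
      linarith
  -- hypothesis gives lower bound on log N
  have hlogeps : Real.log (1/(2*s)) = (1-δ)*Real.log t - Real.log 2 := by
    rw [one_div, Real.log_inv, Real.log_mul two_ne_zero (ne_of_gt hs), Real.log_rpow ht0]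
    ring
  have hNlb : c*(1-δ)*Real.log t - c*Real.log 2 ≤ Real.log N := by
    rw [hlogeps] at hN
    nlinarith [hN]
  have hmin_lb : c*(1-δ)*Real.log t - (c+1)*Real.log 2 ≤ Real.log I⁻¹ := by
    have h5 : c*(1-δ)*Real.log t - c*Real.log 2 ≤ min (Real.log N) (t^δ) := by
      apply le_min hNlb
      have := hrpow
      nlinarith
    linarith [hminlog]
  -- divide
  have hfinal : c*(1-δ) - η ≤ Real.log I⁻¹ / Real.log t := by
    rw [le_div_iff₀ hlt]
    have h6 : (c+1)*Real.log 2 ≤ η * Real.log t := by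
      rw [div_le_iff₀ hη] at hlogt
      nlinarith
    nlinarith [hmin_lb]
  exact ENNReal.ofReal_le_ofReal hfinal

end Core

section Directions

variable (hhom : ∀ a b : A, ∃ f : A ≃ᵢ A, f a = b)
  (hinv : ∀ f : A ≃ᵢ A, Measure.map f μ = μ) (a : A)

local notation "G" => fun ε : ℝ =>
  ENNReal.ofReal (Real.log (coveringNumber A ε) / Real.log (1 / ε))

local notation "F" => fun t : ℝ =>
  ENNReal.ofReal (Real.log (∫ b, Real.exp (-t * dist a b) ∂μ)⁻¹ / Real.log t)

lemma h3_aux {r : ℝ} (hr : 0 < r) :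
    ∀ᶠ t : ℝ in atTop, ENNReal.ofReal (1/Real.log t) ≤ ENNReal.ofReal r := by
  have htend : Tendsto (fun t : ℝ => 1/Real.log t) atTop (𝓝 0) := by
    exact Tendsto.congr (fun t => by simp [one_div, Pi.inv_apply])
      Real.tendsto_log_atTop.inv_tendsto_atTop
  filter_upwards [htend.eventually_le_const hr] with t ht
  exact ENNReal.ofReal_le_ofReal ht

include hhom hinv

lemma dir1 : limsup F atTop ≤ upperMinkowski A := by
  apply ENNReal.le_of_forall_pos_le_add
  intro ε hε hlt
  set r : ℝ := (ε:ℝ)/2 with hrdef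
  have hr : 0 < r := by positivity
  have hU2 : upperMinkowski A < upperMinkowski A + ENNReal.ofReal r :=
    ENNReal.lt_add_right hlt.ne (ENNReal.ofReal_pos.mpr hr).ne'
  have h1 : ∀ᶠ x in 𝓝[>] (0:ℝ), G x < upperMinkowski A + ENNReal.ofReal r :=
    eventually_lt_of_limsup_lt hU2
  rw [← map_inv_atTop_real, Filter.eventually_map] at h1
  refine limsup_le_of_le (by isBoundedDefault) ?_
  filter_upwards [F_upper_event hhom μ hinv a, h1, h3_aux hr] with t hF h2t h3t
  have h1t : (1:ℝ)/t = t⁻¹ := one_div t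
  calc F t ≤ G (1/t) + ENNReal.ofReal (1/Real.log t) := hF
  _ ≤ (upperMinkowski A + ENNReal.ofReal r) + ENNReal.ofReal r := by
      rw [h1t]; exact add_le_add h2t.le h3t
  _ = upperMinkowski A + ENNReal.ofReal (r + r) := by
      rw [add_assoc, ENNReal.ofReal_add hr.le hr.le]
  _ = upperMinkowski A + ↑ε := by
      congr 1
      rw [hrdef]
      rw [show (ε:ℝ)/2 + (ε:ℝ)/2 = (ε:ℝ) by ring, ENNReal.ofReal_coe_nnreal]

lemma dir2 : liminf F atTop ≤ lowerMinkowski A := by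
  apply ENNReal.le_of_forall_pos_le_add
  intro ε hε hlt
  set r : ℝ := (ε:ℝ)/2 with hrdef
  have hr : 0 < r := by positivity
  have hU2 : lowerMinkowski A < lowerMinkowski A + ENNReal.ofReal r :=
    ENNReal.lt_add_right hlt.ne (ENNReal.ofReal_pos.mpr hr).ne'
  have h1 : ∃ᶠ x in 𝓝[>] (0:ℝ), G x < lowerMinkowski A + ENNReal.ofReal r :=
    frequently_lt_of_liminf_lt isCobounded_ge_of_top hU2
  rw [← map_inv_atTop_real, Filter.frequently_map] at h1
  refine liminf_le_of_frequently_le ?_ (by isBoundedDefault)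
  apply (h1.and_eventually ((F_upper_event hhom μ hinv a).and (h3_aux hr))).mono
  rintro t ⟨h2t, hF, h3t⟩
  have h1t : (1:ℝ)/t = t⁻¹ := one_div t
  calc F t ≤ G (1/t) + ENNReal.ofReal (1/Real.log t) := hF
  _ ≤ (lowerMinkowski A + ENNReal.ofReal r) + ENNReal.ofReal r := by
      rw [h1t]; exact add_le_add h2t.le h3t
  _ = lowerMinkowski A + ENNReal.ofReal (r + r) := by
      rw [add_assoc, ENNReal.ofReal_add hr.le hr.le]
  _ = lowerMinkowski A + ↑ε := by
      congr 1
      rw [hrdef]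
      rw [show (ε:ℝ)/2 + (ε:ℝ)/2 = (ε:ℝ) by ring, ENNReal.ofReal_coe_nnreal]

-- real inequality extraction
omit hhom hinv in
lemma G_extract {c x : ℝ} (hc : 0 ≤ c) (hx : x ∈ Set.Ioo (0:ℝ) 1)
    (hGx : ENNReal.ofReal c < G x) :
    c * Real.log (1/x) ≤ Real.log (coveringNumber A x) := by
  have hlog1x : 0 < Real.log (1/x) := by
    rw [one_div, Real.log_inv]
    have := Real.log_neg hx.1 hx.2
    linarith
  have h1 : c < Real.log (coveringNumber A x) / Real.log (1/x) :=
    (ENNReal.ofReal_lt_ofReal_iff_of_nonneg hc).mp hGx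
  have := (lt_div_iff₀ hlog1x).mp h1
  linarith

omit hhom hinv in
lemma m2_tmap {δ x : ℝ} (hδ1 : δ < 1) (hx : 0 < x) : 2*((x/2)^(1/(δ-1)))^(δ-1) = x := by
  rw [← Real.rpow_mul (by positivity : (0:ℝ) ≤ x/2), one_div_mul_cancel (by linarith : δ-1 ≠ 0),
    Real.rpow_one]
  ring

lemma dir3 : lowerMinkowski A ≤ liminf F atTop := by
  by_contra hcon
  push_neg at hcon
  obtain ⟨b, hb1, hb2⟩ := exists_between hcon
  obtain ⟨b2, hb21, hb22⟩ := exists_between hb2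
  have hbtop : b ≠ ⊤ := ne_top_of_lt hb21
  have hb2top : b2 ≠ ⊤ := ne_top_of_lt hb22
  set c := b2.toReal with hc
  set c0 := b.toReal with hc0
  have hc0c : c0 < c := (ENNReal.toReal_lt_toReal hbtop hb2top).mpr hb21
  have hc0n : 0 ≤ c0 := ENNReal.toReal_nonneg
  have hcpos : 0 < c := lt_of_le_of_lt hc0n hc0c
  set δ := (c-c0)/(2*c) with hδ
  set η := (c-c0)/4 with hη
  have hδ0 : 0 < δ := div_pos (by linarith) (by linarith)
  have hδ1 : δ < 1 := by rw [hδ, div_lt_one (by linarith)]; linarith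
  have hη0 : 0 < η := by rw [hη]; linarith
  have hofc : ENNReal.ofReal c = b2 := ENNReal.ofReal_toReal hb2top
  have hev : ∀ᶠ x in 𝓝[>] (0:ℝ), ENNReal.ofReal c < G x := by
    rw [hofc]; exact eventually_lt_of_lt_liminf hb22
  have h01 : ∀ᶠ x in 𝓝[>] (0:ℝ), x ∈ Set.Ioo (0:ℝ) 1 :=
    eventually_of_mem (Ioo_mem_nhdsGT_of_mem ⟨le_refl 0, one_pos⟩) (fun x hx => hx)
  have hev2 : ∀ᶠ x in 𝓝[>] (0:ℝ), c * Real.log (1/x) ≤ Real.log (coveringNumber A x) := by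
    filter_upwards [hev, h01] with x h1 h2
    exact G_extract hcpos.le h2 h1
  have hev3 : ∀ᶠ t : ℝ in atTop,
      c * Real.log (1/(2*t^(δ-1))) ≤ Real.log (coveringNumber A (2*t^(δ-1))) :=
    (tendsto_m2 hδ1).eventually hev2
  have hev4 : ∀ᶠ t : ℝ in atTop, ENNReal.ofReal (c*(1-δ) - η) ≤ F t := by
    filter_upwards [F_lower_event hhom μ hinv a hδ0 hδ1 hcpos.le hη0, hev3] with t h1 h2
    exact h1 h2
  have hlim : ENNReal.ofReal (c*(1-δ) - η) ≤ liminf F atTop :=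
    le_liminf_of_le (by isBoundedDefault) hev4
  have hnum : c0 ≤ c*(1-δ) - η := by
    have hcd : c * δ = (c-c0)/2 := by rw [hδ]; field_simp
    rw [hη]; nlinarith [hcd]
  have hfin : b ≤ liminf F atTop := by
    calc b = ENNReal.ofReal c0 := (ENNReal.ofReal_toReal hbtop).symm
    _ ≤ ENNReal.ofReal (c*(1-δ) - η) := ENNReal.ofReal_le_ofReal hnum
    _ ≤ _ := hlim
  exact absurd hb1 (not_lt.mpr hfin)

lemma dir4 : upperMinkowski A ≤ limsup F atTop := by
  by_contra hcon
  push_neg at hcon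
  obtain ⟨b, hb1, hb2⟩ := exists_between hcon
  obtain ⟨b2, hb21, hb22⟩ := exists_between hb2
  have hbtop : b ≠ ⊤ := ne_top_of_lt hb21
  have hb2top : b2 ≠ ⊤ := ne_top_of_lt hb22
  set c := b2.toReal with hc
  set c0 := b.toReal with hc0
  have hc0c : c0 < c := (ENNReal.toReal_lt_toReal hbtop hb2top).mpr hb21
  have hc0n : 0 ≤ c0 := ENNReal.toReal_nonneg
  have hcpos : 0 < c := lt_of_le_of_lt hc0n hc0c
  set δ := (c-c0)/(2*c) with hδ
  set η := (c-c0)/4 with hη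
  have hδ0 : 0 < δ := div_pos (by linarith) (by linarith)
  have hδ1 : δ < 1 := by rw [hδ, div_lt_one (by linarith)]; linarith
  have hη0 : 0 < η := by rw [hη]; linarith
  have hofc : ENNReal.ofReal c = b2 := ENNReal.ofReal_toReal hb2top
  set tm : ℝ → ℝ := fun x => (x/2)^(1/(δ-1)) with htm
  have hfreq : ∃ᶠ x in 𝓝[>] (0:ℝ), ENNReal.ofReal c < G x := by
    rw [hofc]; exact frequently_lt_of_lt_limsup isCobounded_le_of_bot hb22
  have h01 : ∀ᶠ x in 𝓝[>] (0:ℝ), x ∈ Set.Ioo (0:ℝ) 1 :=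
    eventually_of_mem (Ioo_mem_nhdsGT_of_mem ⟨le_refl 0, one_pos⟩) (fun x hx => hx)
  have hTev : ∀ᶠ x in 𝓝[>] (0:ℝ),
      (c * Real.log (1/(2*(tm x)^(δ-1))) ≤ Real.log (coveringNumber A (2*(tm x)^(δ-1))) →
        ENNReal.ofReal (c*(1-δ) - η) ≤ F (tm x)) :=
    (tendsto_tmap hδ0 hδ1).eventually (F_lower_event hhom μ hinv a hδ0 hδ1 hcpos.le hη0)
  have hcomb : ∃ᶠ x in 𝓝[>] (0:ℝ), ENNReal.ofReal (c*(1-δ) - η) ≤ F (tm x) := by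
    apply (hfreq.and_eventually (h01.and hTev)).mono
    rintro x ⟨hGx, hx01, himp⟩
    apply himp
    rw [m2_tmap hδ1 hx01.1]
    exact G_extract hcpos.le hx01 hGx
  have hfm : ∃ᶠ t in Filter.map tm (𝓝[>] (0:ℝ)), ENNReal.ofReal (c*(1-δ) - η) ≤ F t :=
    Filter.frequently_map.mpr hcomb
  have hfq : ∃ᶠ t in atTop, ENNReal.ofReal (c*(1-δ) - η) ≤ F t :=
    hfm.filter_mono (tendsto_tmap hδ0 hδ1)
  have hlim : ENNReal.ofReal (c*(1-δ) - η) ≤ limsup F atTop :=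
    le_limsup_of_frequently_le hfq (by isBoundedDefault)
  have hnum : c0 ≤ c*(1-δ) - η := by
    have hcd : c * δ = (c-c0)/2 := by rw [hδ]; field_simp
    rw [hη]; nlinarith [hcd]
  have hfin : b ≤ limsup F atTop := by
    calc b = ENNReal.ofReal c0 := (ENNReal.ofReal_toReal hbtop).symm
    _ ≤ ENNReal.ofReal (c*(1-δ) - η) := ENNReal.ofReal_le_ofReal hnum
    _ ≤ _ := hlim
  exact absurd hb1 (not_lt.mpr hfin)

end Directions

end Aux

/-- Let `A` be a nonempty compact homogeneous metric space and `μ` a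
Borel probability measure on `A` invariant under every self-isometry.  With
`m_a(t) = (∫ e^{-t d(a,b)} dμ(b))⁻¹`, for every `a ∈ A` the limsup (resp. liminf) of
`log m_a(t)/log t` as `t → ∞` is the upper (resp. lower) Minkowski dimension of `A`. -/
theorem stmt18 (A : Type*) [MetricSpace A] [MeasurableSpace A] [BorelSpace A]
    [CompactSpace A] [Nonempty A]
    (hhom : ∀ a b : A, ∃ f : A ≃ᵢ A, f a = b)
    (μ : Measure A) [IsProbabilityMeasure μ]
    (hinv : ∀ f : A ≃ᵢ A, Measure.map f μ = μ) (a : A) :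
    limsup (fun t : ℝ =>
        ENNReal.ofReal (Real.log (∫ b, Real.exp (-t * dist a b) ∂μ)⁻¹ / Real.log t)) atTop
      = upperMinkowski A ∧
    liminf (fun t : ℝ =>
        ENNReal.ofReal (Real.log (∫ b, Real.exp (-t * dist a b) ∂μ)⁻¹ / Real.log t)) atTop
      = lowerMinkowski A := by
  constructor
  · exact le_antisymm (dir1 hhom μ hinv a) (dir4 hhom μ hinv a)
  · exact le_antisymm (dir2 hhom μ hinv a) (dir3 hhom μ hinv a)
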